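/- arXiv:1411.4404 — 7 statements merged into one kernel-verified Lean document; each statement's English description precedes it below -/
import Mathlib

section
/- Let V be an n-dimensional real inner product space with n ≥ 3. The linear map A ↦ A ∧ id from bilinear forms on V to Λ²V* ⊗ so(V) (the suspension defined by (A ∧ id)_{X,Y} := A(Y,·) ∧ X − A(X,·) ∧ Y) is injective. -/
noncomputable section

/-- `V n` is the model `n`-dimensional real inner product space. -/
abbrev V (n : ℕ) := EuclideanSpace ℝ (Fin n)

/-- The standard orthonormal basis of `V n`. -/
def ee (n : ℕ) (i : Fin n) : V n := EuclideanSpace.single i 1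

/-- The vector dual to a (linear) functional `f`, `⟨sharpF f, z⟩ = f z`. -/
def sharpF {n : ℕ} (f : V n → ℝ) : V n := ∑ i, f (ee n i) • ee n i

/-- The suspension `(A ∧ id)_{X,Y}(Z) := (A(Y,·) ∧ X)(Z) − (A(X,·) ∧ Y)(Z)`,
where `(α ∧ X)(Z) := α(Z)X − ⟨X,Z⟩α♯`. -/
def susp {n : ℕ} (A : V n → V n → ℝ) (x y z : V n) : V n :=
  (A y z • x - (inner ℝ x z : ℝ) • sharpF (A y))
    - (A x z • y - (inner ℝ y z : ℝ) • sharpF (A x))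

/-- The Ricci contraction `ric(R)(X,Y) := tr (Z ↦ R_{Z,X}Y)`. -/
def ricci {n : ℕ} (R : V n → V n → V n → V n) (x y : V n) : ℝ :=
  ∑ i, (inner ℝ (R (ee n i) x y) (ee n i) : ℝ)

lemma inner_ee {n : ℕ} (i l : Fin n) : (inner ℝ (ee n i) (ee n l) : ℝ) = if i = l then 1 else 0 := by
  simp [ee, EuclideanSpace.inner_single_left, EuclideanSpace.single_apply, eq_comm]

lemma inner_sharpF {n : ℕ} (f : V n → ℝ) (l : Fin n) :
    (inner ℝ (sharpF f) (ee n l) : ℝ) = f (ee n l) := by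
  unfold sharpF
  rw [sum_inner]
  simp only [real_inner_smul_left, inner_ee]
  simp

lemma susp_component {n : ℕ} (A : V n →ₗ[ℝ] V n →ₗ[ℝ] ℝ) (i j k l : Fin n) :
    (inner ℝ (susp (fun a b => A a b) (ee n i) (ee n j) (ee n k)) (ee n l) : ℝ)
    = A (ee n j) (ee n k) * (if i = l then 1 else 0)
      - (if i = k then 1 else 0) * A (ee n j) (ee n l)
      - A (ee n i) (ee n k) * (if j = l then 1 else 0)
      + (if j = k then 1 else 0) * A (ee n i) (ee n l) := by
  unfold susp
  rw [inner_sub_left, inner_sub_left, inner_sub_left, real_inner_smul_left, real_inner_smul_left,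
    real_inner_smul_left, real_inner_smul_left, inner_sharpF, inner_sharpF, inner_ee, inner_ee,
    inner_ee, inner_ee]
  ring


/-- For `n ≥ 3`, the suspension map `A ↦ A ∧ id` is injective on bilinear forms. -/
theorem susp_injective {n : ℕ} (hn : 3 ≤ n) (A B : V n →ₗ[ℝ] V n →ₗ[ℝ] ℝ)
    (h : (susp fun a b => A a b) = (susp fun a b => B a b)) : A = B := by
  have key : ∀ i j k l : Fin n,
      A (ee n j) (ee n k) * (if i = l then 1 else 0)
        - (if i = k then 1 else 0) * A (ee n j) (ee n l)
        - A (ee n i) (ee n k) * (if j = l then 1 else 0)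
        + (if j = k then 1 else 0) * A (ee n i) (ee n l)
      = B (ee n j) (ee n k) * (if i = l then 1 else 0)
        - (if i = k then 1 else 0) * B (ee n j) (ee n l)
        - B (ee n i) (ee n k) * (if j = l then 1 else 0)
        + (if j = k then 1 else 0) * B (ee n i) (ee n l) := by
    intro i j k l
    have h' := congrFun (congrFun (congrFun h (ee n i)) (ee n j)) (ee n k)
    have h2 := congrArg (fun v : V n => (inner ℝ v (ee n l) : ℝ)) h'
    simpa only [susp_component] using h2
  -- diagonal sums: for i ≠ j, A_{jj} + A_{ii} = B_{jj} + B_{ii}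
  have diagsum : ∀ i j : Fin n, i ≠ j →
      A (ee n j) (ee n j) + A (ee n i) (ee n i)
        = B (ee n j) (ee n j) + B (ee n i) (ee n i) := by
    intro i j hij
    have := key i j j i
    simp only [if_pos rfl, if_neg hij, if_neg (Ne.symm hij), if_true] at this
    linarith
  have main : ∀ x y : Fin n, A (ee n x) (ee n y) = B (ee n x) (ee n y) := by
    intro x y
    by_cases hxy : x = y
    · subst hxy
      -- pick p q distinct from x and each other
      obtain ⟨p, q, hpq, hpx, hqx⟩ : ∃ p q : Fin n, p ≠ q ∧ p ≠ x ∧ q ≠ x := by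
        have hcard : 1 < (({x} : Finset (Fin n))ᶜ).card := by
          rw [Finset.card_compl]
          simp only [Finset.card_singleton, Fintype.card_fin]
          omega
        obtain ⟨p, hp, q, hq, hpq⟩ := Finset.one_lt_card.mp hcard
        simp only [Finset.mem_compl, Finset.mem_singleton] at hp hq
        exact ⟨p, q, hpq, hp, hq⟩
      have e1 := diagsum p x hpx
      have e2 := diagsum q x hqx
      have e3 := diagsum p q hpq
      linarith
    · -- off diagonal: find i distinct from x and y
      obtain ⟨i, hix, hiy⟩ : ∃ i : Fin n, i ≠ x ∧ i ≠ y := by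
        have hne : (({x, y} : Finset (Fin n))ᶜ).Nonempty := by
          rw [← Finset.card_pos, Finset.card_compl]
          have h2 : ({x, y} : Finset (Fin n)).card ≤ 2 :=
            (Finset.card_insert_le _ _).trans (by simp)
          simp only [Fintype.card_fin]
          omega
        obtain ⟨i, hi⟩ := hne
        simp only [Finset.mem_compl, Finset.mem_insert, Finset.mem_singleton, not_or] at hi
        exact ⟨i, hi.1, hi.2⟩
      have := key i x y i
      simp only [if_pos rfl, if_neg hix, if_neg (fun hc : x = y => hxy hc),
        if_neg (fun hc : x = i => hix hc.symm), if_neg hiy, if_true] at this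
      linarith
  refine Module.Basis.ext (EuclideanSpace.basisFun (Fin n) ℝ).toBasis fun i => ?_
  refine Module.Basis.ext (EuclideanSpace.basisFun (Fin n) ℝ).toBasis fun j => ?_
  simpa only [OrthonormalBasis.coe_toBasis, EuclideanSpace.basisFun_apply, ee] using main i j
end
end

section
/- Let V be a 2-dimensional real inner product space. The kernel of the suspension map A ↦ A ∧ id on symmetric bilinear forms on V consists exactly of the trace-free symmetric bilinear forms. -/
noncomputable section

lemma decomp (v : V 2) : v = v 0 • ee 2 0 + v 1 • ee 2 1 := by
  ext i
  fin_cases i <;> simp [ee, EuclideanSpace.single_apply]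

lemma sharpF_apply (f : V 2 → ℝ) (i : Fin 2) : sharpF f i = f (ee 2 i) := by
  simp only [sharpF, Finset.sum_apply, PiLp.smul_apply, smul_eq_mul, ee,
    EuclideanSpace.single_apply, Fin.sum_univ_two]
  fin_cases i <;> simp

/-- In dimension 2, a symmetric bilinear form lies in the kernel of the suspension map
`A ↦ A ∧ id` if and only if it is trace-free. -/
theorem susp_kernel_dim_two (A : V 2 →ₗ[ℝ] V 2 →ₗ[ℝ] ℝ) (hsym : ∀ x y, A x y = A y x) :
    (susp fun a b => A a b) = (fun _ _ _ => (0 : V 2)) ↔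
      (∑ i, A (ee 2 i) (ee 2 i)) = 0 := by
  have hA : ∀ x y : V 2, A x y =
      x 0 * y 0 * A (ee 2 0) (ee 2 0) + x 0 * y 1 * A (ee 2 0) (ee 2 1)
      + x 1 * y 0 * A (ee 2 1) (ee 2 0) + x 1 * y 1 * A (ee 2 1) (ee 2 1) := by
    intro x y
    conv_lhs => rw [decomp x, decomp y]
    simp only [map_add, map_smul, LinearMap.add_apply, LinearMap.smul_apply, smul_eq_mul]
    ring
  constructor
  · intro h
    have h0 := congrFun (congrFun (congrFun h (ee 2 0)) (ee 2 1)) (ee 2 0)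
    have h1 := congrArg (fun v : V 2 => v 1) h0
    simp only [susp, PiLp.sub_apply, PiLp.smul_apply, smul_eq_mul, sharpF_apply] at h1
    have hi : ∀ i j : Fin 2, (inner ℝ (ee 2 i) (ee 2 j) : ℝ) = if j = i then 1 else 0 := by
      intro i j
      fin_cases i <;> fin_cases j <;> simp [ee, PiLp.inner_apply, EuclideanSpace.single_apply]
    rw [Fin.sum_univ_two]
    have he : ∀ i j : Fin 2, (ee 2 i : V 2) j = if j = i then 1 else 0 := by
      intro i j; simp [ee, EuclideanSpace.single_apply]
    rw [hi, hi, he, he] at h1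
    norm_num [PiLp.zero_apply] at h1
    linarith [h1, hsym (ee 2 0) (ee 2 1)]
  · intro htr
    rw [Fin.sum_univ_two] at htr
    funext x y z
    ext i
    have hiz : ∀ w : V 2, (inner ℝ w z : ℝ) = w 0 * z 0 + w 1 * z 1 := by
      intro w; simp [PiLp.inner_apply, Fin.sum_univ_two]; ring
    have he : ∀ j k : Fin 2, (ee 2 j : V 2) k = if k = j then 1 else 0 := by
      intro j k; simp [ee, EuclideanSpace.single_apply]
    have h11 : A (ee 2 1) (ee 2 1) = -A (ee 2 0) (ee 2 0) := by linarith
    have h10 : A (ee 2 1) (ee 2 0) = A (ee 2 0) (ee 2 1) := hsym _ _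
    simp only [susp, PiLp.sub_apply, PiLp.smul_apply, smul_eq_mul, sharpF_apply, hiz,
      PiLp.zero_apply]
    rw [hA y z, hA x z, hA y (ee 2 i), hA x (ee 2 i), h11, h10]
    simp only [he]
    have hcase : i = 0 ∨ i = 1 := by omega
    rcases hcase with rfl | rfl <;> norm_num <;> ring
end
end

section
/- Let V be an n-dimensional real inner product space and F a skew-symmetric bilinear form on V. Then the Ricci contraction of F̃ := −(1/2)(F ∧ id) + F ⊗ id equals −(n/2)·F. -/
noncomputable section

lemma inner_ee_right {n : ℕ} (z : V n) (i : Fin n) : (inner ℝ z (ee n i) : ℝ) = z i := by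
  simp [ee, EuclideanSpace.inner_single_right]

lemma inner_ee_left {n : ℕ} (z : V n) (i : Fin n) : (inner ℝ (ee n i) z : ℝ) = z i := by
  simp [ee, EuclideanSpace.inner_single_left]

lemma ee_apply {n : ℕ} (i j : Fin n) : ee n i j = if i = j then 1 else 0 := by
  simp [ee, EuclideanSpace.single_apply]
  exact if_congr ⟨Eq.symm, Eq.symm⟩ rfl rfl

lemma repr_sum {n : ℕ} (z : V n) : ∑ i, z i • ee n i = z := by
  ext j
  rw [WithLp.ofLp_sum, Finset.sum_apply]
  simp [ee, EuclideanSpace.single_apply, eq_comm]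

lemma sharp_inner {n : ℕ} (g : V n → ℝ) (i : Fin n) :
    (inner ℝ (sharpF g) (ee n i) : ℝ) = g (ee n i) := by
  rw [sharpF, sum_inner]
  simp [real_inner_smul_left, inner_ee_right, ee_apply]

lemma F_right {n : ℕ} (F : V n →ₗ[ℝ] V n →ₗ[ℝ] ℝ) (x z : V n) :
    ∑ i, z i * F x (ee n i) = F x z := by
  conv_rhs => rw [← repr_sum z]
  rw [map_sum]
  simp [smul_eq_mul]

lemma F_left {n : ℕ} (F : V n →ₗ[ℝ] V n →ₗ[ℝ] ℝ) (x z : V n) :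
    ∑ i, x i * F (ee n i) z = F x z := by
  conv_rhs => rw [← repr_sum x]
  rw [map_sum, LinearMap.sum_apply]
  simp [smul_eq_mul]

/-- For a skew-symmetric bilinear form `F` on an `n`-dimensional inner product space,
the Ricci contraction of `F̃ := −(1/2)(F ∧ id) + F ⊗ id` equals `−(n/2)·F`. -/
theorem ricci_faraday {n : ℕ} (F : V n →ₗ[ℝ] V n →ₗ[ℝ] ℝ)
    (hskew : ∀ x y, F x y = - F y x) (x y : V n) :
    ricci (fun a b c => -(1 / 2 : ℝ) • susp (fun u v => F u v) a b c + F a b • c) x y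
      = -((n : ℝ) / 2) * F x y := by
  have hFii : ∀ i, F (ee n i) (ee n i) = 0 := fun i => by
    have := hskew (ee n i) (ee n i); linarith
  have key : ∀ i, (inner ℝ ((-(1 / 2 : ℝ) • susp (fun u v => F u v) (ee n i) x y
        + F (ee n i) x • y)) (ee n i) : ℝ)
      = -(1/2) * F x y + (1/2) * (y i * F x (ee n i))
        + (1/2) * (x i * F (ee n i) y) + F (ee n i) x * y i := by
    intro i
    rw [inner_add_left, real_inner_smul_left, real_inner_smul_left, susp,
      inner_sub_left, inner_sub_left, inner_sub_left, real_inner_smul_left,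
      real_inner_smul_left, real_inner_smul_left, real_inner_smul_left,
      sharp_inner, sharp_inner, inner_ee_right, inner_ee_right, inner_ee_right,
      inner_ee_left, hFii]
    have h1 : ee n i i = 1 := by simp [ee_apply]
    rw [h1]
    ring
  have e1 : ∑ i, y i * F x (ee n i) = F x y := F_right F x y
  have e2 : ∑ i, x i * F (ee n i) y = F x y := F_left F x y
  have e3 : ∑ i, F (ee n i) x * y i = - F x y := by
    calc ∑ i, F (ee n i) x * y i = ∑ i, y i * F (ee n i) x := by
          exact Finset.sum_congr rfl fun i _ => mul_comm _ _
      _ = F y x := F_left F y x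
      _ = - F x y := hskew y x
  unfold ricci
  calc (∑ i, (inner ℝ ((-(1 / 2 : ℝ) • susp (fun u v => F u v) (ee n i) x y
        + F (ee n i) x • y)) (ee n i) : ℝ))
      = ∑ i, (-(1/2) * F x y + (1/2) * (y i * F x (ee n i))
        + (1/2) * (x i * F (ee n i) y) + F (ee n i) x * y i) := by
        exact Finset.sum_congr rfl fun i _ => key i
    _ = (∑ _i : Fin n, -(1/2) * F x y) + (1/2) * (∑ i, y i * F x (ee n i))
        + (1/2) * (∑ i, x i * F (ee n i) y) + ∑ i, F (ee n i) x * y i := by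
        rw [Finset.sum_add_distrib, Finset.sum_add_distrib, Finset.sum_add_distrib,
          ← Finset.mul_sum, ← Finset.mul_sum, ← Finset.mul_sum]
    _ = -((n : ℝ) / 2) * F x y := by
        rw [e1, e2, e3, Finset.sum_const, Finset.card_univ, Fintype.card_fin,
          nsmul_eq_mul]
        ring
end
end

section
/- Let V be a 2-dimensional real inner product space. Then every element of Λ²V* ⊗ co(V), where co(V) = so(V) ⊕ ℝ·id, satisfies the first Bianchi identity R_{X,Y}Z + R_{Y,Z}X + R_{Z,X}Y = 0. -/
noncomputable section

lemma decomp_two (x : V 2) : x = x 0 • ee 2 0 + x 1 • ee 2 1 := by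
  ext i
  fin_cases i <;>
    simp [ee, PiLp.add_apply, PiLp.smul_apply, EuclideanSpace.single_apply]

lemma omega_id (x y z : V 2) :
    (x 0 * y 1 - x 1 * y 0) • z + (y 0 * z 1 - y 1 * z 0) • x
      + (z 0 * x 1 - z 1 * x 0) • y = 0 := by
  ext i
  fin_cases i <;> simp <;> ring

/-- On a 2-dimensional real inner product space, every element of `Λ²V* ⊗ co(V)`
(an alternating bilinear map with values in `co(V) = so(V) ⊕ ℝ·id`) satisfies the
first Bianchi identity. -/
theorem bianchi_dim_two (R : V 2 →ₗ[ℝ] V 2 →ₗ[ℝ] V 2 →ₗ[ℝ] V 2)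
    (halt : ∀ x y, R x y = - R y x)
    (hco : ∀ x y, ∃ c : ℝ, ∀ z w,
      (inner ℝ (R x y z) w : ℝ) + (inner ℝ (R x y w) z : ℝ) = 2 * c * (inner ℝ z w : ℝ))
    (x y z : V 2) :
    R x y z + R y z x + R z x y = 0 := by
  have hxx : ∀ w : V 2, R w w = 0 := by
    intro w
    have h := halt w w
    have h2 : (2 : ℝ) • R w w = 0 := by
      rw [two_smul]; nth_rewrite 1 [h]; abel
    simpa using (smul_eq_zero.mp h2).resolve_left (by norm_num)
  have hdec : ∀ a b : V 2, R a b
      = (a 0 * b 1 - a 1 * b 0) • R (ee 2 0) (ee 2 1) := by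
    intro a b
    conv_lhs => rw [decomp_two a, decomp_two b]
    simp only [map_add, map_smul, LinearMap.add_apply, LinearMap.smul_apply, hxx,
      smul_zero, add_zero, zero_add]
    rw [halt (ee 2 1) (ee 2 0)]
    rw [sub_smul]
    module
  rw [hdec x y, hdec y z, hdec z x]
  simp only [LinearMap.smul_apply]
  rw [← map_smul, ← map_smul, ← map_smul, ← map_add, ← map_add, omega_id, map_zero]
end
end

section
/- Let (M,g) be a Riemannian manifold, θ a smooth 1-form, and ∇' := ∇ᵍ + θ̃ the associated Weyl connection with θ̃_X Y = θ(X)Y + θ(Y)X − g(X,Y)θ♯. Then the curvature tensors satisfy R^{∇'}_{X,Y}Z = R^{∇ᵍ}_{X,Y}Z − ((∇ᵍθ) ∧ id)_{X,Y}Z + [θ♭ ∧ X, θ♭ ∧ Y](Z) + dθ(X,Y)Z for all vector fields X, Y, Z, where (α ∧ X)(W) := α(W)X − g(X,W)α♯ and (A ∧ id)_{X,Y} := A(Y,·)∧X − A(X,·)∧Y. -/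
noncomputable section
set_option maxRecDepth 16000
set_option maxHeartbeats 2000000

/-- An algebraic model of the calculus of vector fields on a Riemannian manifold:
`C` plays the role of the ring of smooth functions, `X` the `C`-module of vector
fields, `act` the derivative of a function along a vector field, `lb` the Lie
bracket, `g` the Riemannian metric and `D` its Levi-Civita connection. -/
structure VFCalc (C : Type*) (X : Type*) [CommRing C] [AddCommGroup X] [Module C X] where
  act : X → C → C
  lb : X → X → X
  g : X → X → C
  D : X → X → X
  g_symm : ∀ y z, g y z = g z y
  g_add : ∀ y z w, g (y + z) w = g y w + g z w
  g_smul : ∀ (f : C) (y z : X), g (f • y) z = f * g y z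
  act_add : ∀ (v : X) (f h : C), act v (f + h) = act v f + act v h
  act_mul : ∀ (v : X) (f h : C), act v (f * h) = act v f * h + f * act v h
  act_addv : ∀ (v w : X) (f : C), act (v + w) f = act v f + act w f
  act_smulv : ∀ (f : C) (v : X) (h : C), act (f • v) h = f * act v h
  act_lb : ∀ (v w : X) (f : C), act v (act w f) - act w (act v f) = act (lb v w) f
  D_addv : ∀ v w y, D (v + w) y = D v y + D w y
  D_add : ∀ v y z, D v (y + z) = D v y + D v z
  D_smulv : ∀ (f : C) v y, D (f • v) y = f • D v y
  D_leib : ∀ (v : X) (f : C) (y : X), D v (f • y) = act v f • y + f • D v y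
  torsion_free : ∀ v w, D v w - D w v = lb v w
  metric : ∀ v y z, act v (g y z) = g (D v y) z + g y (D v z)

variable {C X : Type*} [CommRing C] [AddCommGroup X] [Module C X]

/-- The Weyl connection `∇' = ∇ + θ̃` associated to a 1-form `θ` with `θ♯ = T`:
`∇'_v w = ∇_v w + θ(v)w + θ(w)v − g(v,w)θ♯`. -/
def weylD (P : VFCalc C X) (θ : X → C) (T : X) (v w : X) : X :=
  P.D v w + θ v • w + θ w • v - P.g v w • T

/-- The curvature `R_{v,w}z := D_v D_w z − D_w D_v z − D_{[v,w]}z` of a connection. -/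
def curv (D lb : X → X → X) (v w z : X) : X :=
  D v (D w z) - D w (D v z) - D (lb v w) z

/-- The covariant derivative `(∇θ)(v,w) := v(θ(w)) − θ(∇_v w)` of a 1-form. -/
def nabla1 (P : VFCalc C X) (θ : X → C) (v w : X) : C :=
  P.act v (θ w) - θ (P.D v w)

/-- The exterior derivative `dθ(v,w) := v(θ(w)) − w(θ(v)) − θ([v,w])` of a 1-form. -/
def dform (P : VFCalc C X) (θ : X → C) (v w : X) : C :=
  P.act v (θ w) - P.act w (θ v) - θ (P.lb v w)

/-- The skew endomorphism `(θ ∧ x)(z) := θ(z)x − g(x,z)θ♯`, with `θ♯ = T`. -/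
def wedgeT (P : VFCalc C X) (θ : X → C) (T : X) (x z : X) : X :=
  θ z • x - P.g x z • T

section Aux

variable (P : VFCalc C X)

lemma g_add' (y z w : X) : P.g y (z + w) = P.g y z + P.g y w := by
  rw [P.g_symm, P.g_add, P.g_symm z y, P.g_symm w y]

lemma g_smul' (f : C) (y z : X) : P.g y (f • z) = f * P.g y z := by
  rw [P.g_symm, P.g_smul, P.g_symm]

lemma g_sub (y z w : X) : P.g (y - z) w = P.g y w - P.g z w := by
  have h : y - z = y + (-1 : C) • z := by rw [neg_one_smul]; abel
  rw [h, P.g_add, P.g_smul]; ring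

lemma g_sub' (y z w : X) : P.g y (z - w) = P.g y z - P.g y w := by
  rw [P.g_symm, g_sub, P.g_symm z y, P.g_symm w y]

lemma D_subv (v w y : X) : P.D (v - w) y = P.D v y - P.D w y := by
  have h : v - w = v + (-1 : C) • w := by rw [neg_one_smul]; abel
  rw [h, P.D_addv, P.D_smulv, neg_one_smul]; abel

lemma act_zero (v : X) : P.act v 0 = 0 := by
  have h := P.act_add v 0 0
  rw [add_zero] at h
  have h2 : P.act v 0 + P.act v 0 = P.act v 0 + 0 := by rw [add_zero]; exact h.symm
  exact add_left_cancel h2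

lemma act_one (v : X) : P.act v 1 = 0 := by
  have h := P.act_mul v 1 1
  rw [mul_one, one_mul, mul_one] at h
  have h2 : P.act v 1 + P.act v 1 = P.act v 1 + 0 := by rw [add_zero]; exact h.symm
  exact add_left_cancel h2

lemma act_negone (v : X) : P.act v (-1) = 0 := by
  have h := P.act_add v 1 (-1)
  rw [add_neg_cancel, act_zero, act_one, zero_add] at h
  exact h.symm

lemma D_sub (v y z : X) : P.D v (y - z) = P.D v y - P.D v z := by
  have h : y - z = y + (-1 : C) • z := by rw [neg_one_smul]; abel
  rw [h, P.D_add, P.D_leib, act_negone, neg_one_smul]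
  simp
  abel

end Aux

/-- Curvature of a Weyl connection `∇' = ∇ᵍ + θ̃`:
`R^{∇'}_{x,y}z = R^{∇ᵍ}_{x,y}z − ((∇ᵍθ) ∧ id)_{x,y}z + [θ♭∧x, θ♭∧y](z) + dθ(x,y)z`.
Here the sharp of `(∇ᵍθ)(y,·)` is `∇ᵍ_y θ♯ = D y T`. -/
theorem weyl_curvature_formula (P : VFCalc C X) (θ : X → C) (T : X)
    (hT : ∀ y, P.g T y = θ y) (x y z : X) :
    curv (weylD P θ T) P.lb x y z
      = curv P.D P.lb x y z
        - ((nabla1 P θ y z • x - P.g x z • P.D y T)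
            - (nabla1 P θ x z • y - P.g y z • P.D x T))
        + (wedgeT P θ T x (wedgeT P θ T y z) - wedgeT P θ T y (wedgeT P θ T x z))
        + dform P θ x y • z := by
  simp only [curv, weylD, nabla1, dform, wedgeT]
  simp only [← hT]
  simp only [← P.torsion_free]
  simp only [P.D_add, D_sub, P.D_leib, P.D_addv, D_subv, P.D_smulv,
    P.metric, g_add', g_sub', g_smul', P.g_add, g_sub, P.g_smul,
    smul_add, smul_sub, add_smul, sub_smul, smul_smul]
  module
end
end

section
/- Let γ: I → M be a smooth regular curve in a Riemannian manifold (M,g) with Levi-Civita connection ∇ᵍ, and set f² := g(γ̇,γ̇). A Weyl connection ∇ = ∇ᵍ + θ̃ along γ satisfies ∇_{γ̇}γ̇ = 0 if and only if the vector field T := θ♯ dual to θ satisfies T = γ̈/f² − 2(f'/f³)γ̇ along γ, where γ̈ := ∇ᵍ_{γ̇}γ̇ and f' := γ̇(f). In particular, the restriction of an adapted Weyl connection's defining 1-form to the curve is unique. -/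
noncomputable section

variable {C X : Type*} [CommRing C] [AddCommGroup X] [Module C X]

/-- A Weyl connection `∇ = ∇ᵍ + θ̃` along a regular curve with velocity `γ̇` (with
speed `f`, `f² = g(γ̇,γ̇)`, `f` invertible with inverse `finv`) is adapted, i.e.
`∇_{γ̇}γ̇ = 0`, if and only if `θ♯ = γ̈/f² − 2(f'/f³)γ̇`, where `γ̈ = ∇ᵍ_{γ̇}γ̇` and
`f' = γ̇(f)`.  In particular the 1-form of an adapted Weyl connection is uniquely
determined along the curve. -/
theorem adapted_weyl_iff (P : VFCalc C X) (γd T : X) (θ : X → C)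
    (hT : ∀ y, P.g T y = θ y)
    (f finv : C) (hf : f * f = P.g γd γd) (hfinv : f * finv = 1) :
    weylD P θ T γd γd = 0 ↔
      T = (finv * finv) • P.D γd γd
        - ((2 : C) * P.act γd f * (finv * finv * finv)) • γd := by
    classical
  -- key scalar identity: 2 g(γ̈, γ̇) = 2 f f'
  have key2 : P.g (P.D γd γd) γd + P.g (P.D γd γd) γd
      = P.act γd f * f + f * P.act γd f := by
    have hm := P.metric γd γd γd
    rw [← hf, P.act_mul] at hm
    rw [P.g_symm γd (P.D γd γd)] at hm
    linear_combination -hm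
  have g_sub : ∀ y z w : X, P.g (y - z) w = P.g y w - P.g z w := by
    intro y z w
    have h := P.g_add (y - z) z w
    rw [sub_add_cancel] at h
    linear_combination -h
  constructor
  · intro h
    have h' : (f * f) • T = P.D γd γd + θ γd • γd + θ γd • γd := by
      unfold weylD at h
      rw [← hf] at h
      have := sub_eq_zero.mp h
      exact this.symm
    -- pair with γd
    have heq : (f * f) * θ γd
        = P.g (P.D γd γd) γd + θ γd * (f * f) + θ γd * (f * f) := by
      have := congrArg (fun x => P.g x γd) h'
      simpa [P.g_smul, P.g_add, hT, ← hf] using this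
    have hTfull : T = (finv * finv) • (P.D γd γd + θ γd • γd + θ γd • γd) := by
      rw [← h', smul_smul]
      have : finv * finv * (f * f) = 1 := by
        linear_combination (finv * f + 1) * hfinv
      rw [this, one_smul]
    rw [hTfull]
    match_scalars
    · ring
    · linear_combination (-2*(finv^4)) * heq + (-(finv^4)) * key2
        + (-(2*finv*finv*θ γd*(1+f*finv) + 2*P.act γd f*finv*finv*finv)) * hfinv
  · intro hTe
    have hθ : θ γd = (finv * finv) * P.g (P.D γd γd) γd
        - (2 * P.act γd f * (finv * finv * finv)) * (f * f) := by
      rw [← hT, hTe, g_sub, P.g_smul, P.g_smul, ← hf]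
    unfold weylD
    rw [← hf, hTe]
    match_scalars
    · linear_combination (-(1+f*finv)) * hfinv
    · linear_combination 2 * hθ + (finv*finv) * key2 + (-(2*P.act γd f*f*finv*finv)) * hfinv
end
end

section
/- Let V be an n-dimensional real inner product space, n ≥ 2, let ν be an inner product space (the normal space), and let T: V ⊗ Sym²₀V → ν be a ν-valued 3-tensor ∇B₀ on V which is symmetric and trace-free in its last two arguments. Suppose there is a linear map a: V → ν with T(X,X,X) = ⟨X,X⟩·a(X) for all X ∈ V (i.e., the total symmetrization of T equals the symmetrization of a ⊗ g). Then 2·δT = (n+2)·a, where (δT)(X) := Σᵢ T(eᵢ, X, eᵢ) for an orthonormal basis {eᵢ} of V. -/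
noncomputable section

/-- If a ν-valued 3-tensor `T`, symmetric and trace-free in its last two arguments,
satisfies `T(X,X,X) = ⟨X,X⟩·a(X)` for a linear map `a`, then `2·δT = (n+2)·a`. -/
theorem trace_symmetrized_tensor {n : ℕ} (hn : 2 ≤ n)
    {ν : Type*} [NormedAddCommGroup ν] [InnerProductSpace ℝ ν]
    (T : V n →ₗ[ℝ] V n →ₗ[ℝ] V n →ₗ[ℝ] ν)
    (hsym : ∀ x y z, T x y z = T x z y)
    (htf : ∀ x, ∑ i, T x (ee n i) (ee n i) = 0)
    (a : V n →ₗ[ℝ] ν)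
    (ha : ∀ x, T x x x = (inner ℝ x x : ℝ) • a x)
    (x : V n) :
    (2 : ℝ) • (∑ i, T (ee n i) x (ee n i)) = ((n : ℝ) + 2) • a x := by
  have key : ∀ y z w : V n,
      T y z w + T y w z + T z y w + T z w y + T w y z + T w z y
        = (2 * (inner ℝ z w : ℝ)) • a y + (2 * (inner ℝ y w : ℝ)) • a z
          + (2 * (inner ℝ y z : ℝ)) • a w := by
    intro y z w
    have comb : T y z w + T y w z + T z y w + T z w y + T w y z + T w z y
        = (T (y+z+w) (y+z+w) (y+z+w) - T (y+z) (y+z) (y+z) - T (z+w) (z+w) (z+w)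
            - T (y+w) (y+w) (y+w) + T y y y + T z z z + T w w w) := by
      simp only [map_add, LinearMap.add_apply]
      rw [hsym z y w, hsym y z w, hsym w y z]; abel
    rw [comb, ha (y+z+w), ha (y+z), ha (z+w), ha (y+w), ha y, ha z, ha w]
    simp only [map_add, inner_add_left, inner_add_right, add_smul, smul_add]
    rw [real_inner_comm w y, real_inner_comm w z, real_inner_comm z y]
    module
  -- representation of x in the standard orthonormal basis
  have hxrep : ∑ i, (inner ℝ x (ee n i) : ℝ) • ee n i = x := by
    have h := (EuclideanSpace.basisFun (Fin n) ℝ).sum_repr' x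
    simp only [EuclideanSpace.basisFun_apply] at h
    simpa [ee, real_inner_comm] using h
  have hx : ∑ i, ((inner ℝ x (ee n i) : ℝ)) • a (ee n i) = a x := by
    conv_rhs => rw [← hxrep]
    simp [map_sum]
  have hinner : ∀ i : Fin n, (inner ℝ (ee n i) (ee n i) : ℝ) = 1 := by
    intro i; simp [ee]
  have hAB : ∑ i, T (ee n i) (ee n i) x = ∑ i, T (ee n i) x (ee n i) :=
    Finset.sum_congr rfl fun i _ => hsym _ _ _
  have e1 : ∑ i, (T x (ee n i) (ee n i) + T x (ee n i) (ee n i) + T (ee n i) x (ee n i)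
        + T (ee n i) (ee n i) x + T (ee n i) x (ee n i) + T (ee n i) (ee n i) x)
      = ∑ i, ((2 * (inner ℝ (ee n i) (ee n i) : ℝ)) • a x
        + (2 * (inner ℝ x (ee n i) : ℝ)) • a (ee n i)
        + (2 * (inner ℝ x (ee n i) : ℝ)) • a (ee n i)) :=
    Finset.sum_congr rfl fun i _ => key x (ee n i) (ee n i)
  simp only [Finset.sum_add_distrib, htf, hAB, hinner, mul_one, mul_smul,
    ← Finset.smul_sum, hx, Finset.sum_const, Finset.card_univ, Fintype.card_fin,
    zero_add, add_zero, ← Nat.cast_smul_eq_nsmul ℝ] at e1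
  set S := ∑ i, T (ee n i) x (ee n i) with hS
  apply smul_right_injective ν (two_ne_zero (α := ℝ))
  linear_combination (norm := module) e1
end
end
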